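/- Let α ∈ ℂ be a complex number that is not rational, i.e., α is not the image of any rational number under the inclusion ℚ ⊂ ℂ. Let P be an irreducible polynomial in two variables z, w over ℂ such that P divides α·z·(∂P/∂z) − w·(∂P/∂w) in the polynomial ring ℂ[z, w]. Then P is a nonzero scalar multiple of z or a nonzero scalar multiple of w. -/

import Mathlib

open MvPolynomial

private lemma fin2_ext {m m' : Fin 2 →₀ ℕ} (h0 : m 0 = m' 0) (h1 : m 1 = m' 1) : m = m' := by
  ext j
  fin_cases j
  · exact h0
  · exact h1

private lemma base_inj {B d1 a1 d2 a2 : ℕ} (hb1 : d1 < B) (hb2 : d2 < B)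
    (ha1 : a1 < B) (ha2 : a2 < B) (h : d1 * B + a1 = d2 * B + a2) : d1 = d2 ∧ a1 = a2 := by
  have key : ∀ x y u v : ℕ, u < B → v < B → x * B + u = y * B + v → x ≤ y := by
    intro x y u v hu hv hxy
    by_contra hc
    push_neg at hc
    have h1 : (y + 1) * B ≤ x * B := mul_le_mul_left hc B
    have h2 : (y + 1) * B = y * B + B := by ring
    linarith
  have h1 := key d1 d2 a1 a2 ha1 ha2 h
  have h2 := key d2 d1 a2 a1 ha2 ha1 h.symm
  have hd : d1 = d2 := le_antisymm h1 h2
  refine ⟨hd, ?_⟩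
  rw [hd] at h
  exact Nat.add_left_cancel h

private lemma single_add_sub {n : Fin 2 →₀ ℕ} {i : Fin 2} (h : n i ≠ 0) :
    Finsupp.single i 1 + (n - Finsupp.single i 1) = n := by
  ext j
  by_cases hj : j = i
  · subst hj
    simp only [Finsupp.add_apply, Finsupp.tsub_apply, Finsupp.single_eq_same]
    omega
  · simp [Finsupp.single_apply, Ne.symm hj, hj]

private lemma X_mul_mono (n : Fin 2 →₀ ℕ) (i : Fin 2) (c : ℂ) :
    (X i : MvPolynomial (Fin 2) ℂ) * monomial (n - Finsupp.single i 1) (c * (n i : ℂ)) =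
      monomial n (c * (n i : ℂ)) := by
  rw [X, monomial_mul, one_mul]
  by_cases h : n i = 0
  · simp [h]
  · rw [single_add_sub h]

private lemma D_monomial (α : ℂ) (n : Fin 2 →₀ ℕ) (c : ℂ) :
    C α * X 0 * pderiv 0 (monomial n c) - X 1 * pderiv 1 (monomial n c) =
      monomial n ((α * (n 0 : ℂ) - (n 1 : ℂ)) * c) := by
  rw [pderiv_monomial, pderiv_monomial, mul_assoc, X_mul_mono, X_mul_mono,
    C_mul_monomial, ← map_sub]
  congr 1
  ring

private lemma coeff_D (α : ℂ) (P : MvPolynomial (Fin 2) ℂ) (m : Fin 2 →₀ ℕ) :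
    coeff m (C α * X 0 * pderiv 0 P - X 1 * pderiv 1 P) =
      (α * (m 0 : ℂ) - (m 1 : ℂ)) * coeff m P := by
  induction P using MvPolynomial.induction_on' with
  | monomial n a =>
    rw [D_monomial]
    classical
    rw [coeff_monomial, coeff_monomial]
    split_ifs with h
    · subst h; rfl
    · ring
  | add p q hp hq =>
    simp only [map_add, mul_add, add_sub_add_comm, coeff_add, hp, hq]

set_option maxHeartbeats 1000000 in
open MvPolynomial in
/-- For irrational `α`, the only irreducible polynomials defining algebraic curves
    invariant by the vector field `α·z·∂/∂z − w·∂/∂w` (i.e. dividing their own image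
    under this derivation) are scalar multiples of the coordinates `z` and `w`. -/
theorem invariant_curves_of_irrational_linear_foliation
    (α : ℂ) (hα : ∀ q : ℚ, (q : ℂ) ≠ α)
    (P : MvPolynomial (Fin 2) ℂ) (hirr : Irreducible P)
    (hdvd : P ∣ (C α * X 0 * pderiv 0 P - X 1 * pderiv 1 P)) :
    (∃ c : ℂ, c ≠ 0 ∧ P = C c * X 0) ∨ (∃ c : ℂ, c ≠ 0 ∧ P = C c * X 1) := by
  have hP0 : P ≠ 0 := hirr.ne_zero
  obtain ⟨Q, hQ⟩ := hdvd
  have hsupp : ∀ m, coeff m (P * Q) = (α * (m 0 : ℂ) - (m 1 : ℂ)) * coeff m P := by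
    intro m; rw [← hQ, coeff_D]
  set B : ℕ :=
    (P.support.sup fun m => m 0 + m 1) + (Q.support.sup fun m => m 0 + m 1) + 1 with hB
  set key : (Fin 2 →₀ ℕ) → ℕ := fun m => (m 0 + m 1) * B + m 0 with hkey
  have key_add : ∀ a b, key (a + b) = key a + key b := by
    intro a b; simp only [hkey, Finsupp.add_apply]; ring
  have hQC : ∃ lam : ℂ, Q = C lam := by
    by_cases hQ0 : Q = 0
    · exact ⟨0, by simp [hQ0]⟩
    obtain ⟨M, hM, hMmax⟩ := P.support.exists_max_image key (support_nonempty.2 hP0)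
    obtain ⟨N, hN, hNmax⟩ := Q.support.exists_max_image key (support_nonempty.2 hQ0)
    have hcoef : coeff (M + N) (P * Q) = coeff M P * coeff N Q := by
      rw [coeff_mul]
      refine Finset.sum_eq_single_of_mem (M, N) (Finset.HasAntidiagonal.mem_antidiagonal.2 rfl) ?_
      · intro x hx hne
        rw [Finset.HasAntidiagonal.mem_antidiagonal] at hx
        by_cases h1 : coeff x.1 P = 0
        · rw [h1, zero_mul]
        by_cases h2 : coeff x.2 Q = 0
        · rw [h2, mul_zero]
        exfalso
        have hx1 : x.1 ∈ P.support := mem_support_iff.2 h1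
        have hx2 : x.2 ∈ Q.support := mem_support_iff.2 h2
        have k1 : key x.1 ≤ key M := hMmax _ hx1
        have k2 : key x.2 ≤ key N := hNmax _ hx2
        have ksum : key x.1 + key x.2 = key M + key N := by
          rw [← key_add, ← key_add, hx]
        have e1 : key x.1 = key M := by omega
        have e2 : key x.2 = key N := by omega
        have ha1 : x.1 0 + x.1 1 ≤ P.support.sup fun m => m 0 + m 1 :=
          Finset.le_sup (f := fun m : Fin 2 →₀ ℕ => m 0 + m 1) hx1
        have ha2 : M 0 + M 1 ≤ P.support.sup fun m => m 0 + m 1 :=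
          Finset.le_sup (f := fun m : Fin 2 →₀ ℕ => m 0 + m 1) hM
        have ha3 : x.2 0 + x.2 1 ≤ Q.support.sup fun m => m 0 + m 1 :=
          Finset.le_sup (f := fun m : Fin 2 →₀ ℕ => m 0 + m 1) hx2
        have ha4 : N 0 + N 1 ≤ Q.support.sup fun m => m 0 + m 1 :=
          Finset.le_sup (f := fun m : Fin 2 →₀ ℕ => m 0 + m 1) hN
        simp only [hkey] at e1 e2
        obtain ⟨ed1, ea1⟩ := base_inj (B := B) (by omega) (by omega) (by omega) (by omega) e1
        obtain ⟨ed2, ea2⟩ := base_inj (B := B) (by omega) (by omega) (by omega) (by omega) e2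
        have hx1M : x.1 = M := fin2_ext ea1 (by omega)
        have hx2N : x.2 = N := fin2_ext ea2 (by omega)
        exact hne (by rw [← hx1M, ← hx2N])
    have hMN : coeff (M + N) (P * Q) ≠ 0 := by
      rw [hcoef]
      exact mul_ne_zero (mem_support_iff.1 hM) (mem_support_iff.1 hN)
    have hMNP : M + N ∈ P.support := by
      rw [mem_support_iff]
      intro h
      rw [hsupp, h, mul_zero] at hMN
      exact hMN rfl
    have hkMN : key (M + N) ≤ key M := hMmax _ hMNP
    rw [key_add] at hkMN
    have hN0 : key N = 0 := by omega
    have key_zero : ∀ n : Fin 2 →₀ ℕ, key n = 0 → n = 0 := by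
      intro n hn
      simp only [hkey] at hn
      have h1 : (n 0 + n 1) * B = 0 := by omega
      have h2 : n 0 + n 1 = 0 := by
        rcases Nat.mul_eq_zero.1 h1 with h | h
        · exact h
        · omega
      apply fin2_ext <;> simp <;> omega
    refine ⟨coeff 0 Q, ?_⟩
    ext m
    rw [coeff_C]
    by_cases hm : m = 0
    · subst hm; simp
    · rw [if_neg (Ne.symm hm)]
      by_contra h
      have hmQ : m ∈ Q.support := mem_support_iff.2 h
      have hle := hNmax _ hmQ
      rw [hN0] at hle
      exact hm (key_zero m (Nat.le_zero.1 hle))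
  obtain ⟨lam, rfl⟩ := hQC
  have heig : ∀ m ∈ P.support, α * (m 0 : ℂ) - (m 1 : ℂ) = lam := by
    intro m hm
    have h1 := hsupp m
    rw [mul_comm, coeff_C_mul] at h1
    have hc : coeff m P ≠ 0 := mem_support_iff.1 hm
    exact (mul_right_cancel₀ hc h1).symm
  have hsing : ∀ m ∈ P.support, ∀ m' ∈ P.support, m = m' := by
    intro m hm m' hm'
    have h := (heig m hm).trans (heig m' hm').symm
    by_cases h0 : m 0 = m' 0
    · have hcc : (m 1 : ℂ) = (m' 1 : ℂ) := by
        rw [h0] at h; linear_combination -h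
      exact fin2_ext h0 (by exact_mod_cast hcc)
    · exfalso
      have hne : ((m 0 : ℂ) - (m' 0 : ℂ)) ≠ 0 := by
        intro hh
        exact h0 (by exact_mod_cast sub_eq_zero.1 hh)
      have hneQ : ((m 0 : ℚ) - (m' 0 : ℚ)) ≠ 0 := by
        intro hh
        have : (m 0 : ℕ) = m' 0 := by exact_mod_cast sub_eq_zero.1 hh
        exact h0 this
      refine hα (((m 1 : ℚ) - (m' 1 : ℚ)) / ((m 0 : ℚ) - (m' 0 : ℚ))) ?_
      push_cast
      rw [div_eq_iff (by exact_mod_cast hneQ : ((m 0 : ℂ) - (m' 0 : ℂ)) ≠ 0)]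
      linear_combination -h
  obtain ⟨M₀, hM₀⟩ := support_nonempty.2 hP0
  have hc0 : coeff M₀ P ≠ 0 := mem_support_iff.1 hM₀
  have hPmono : P = monomial M₀ (coeff M₀ P) := by
    ext m
    rw [coeff_monomial]
    by_cases hm : M₀ = m
    · rw [if_pos hm, hm]
    · rw [if_neg hm]
      by_contra h
      exact hm (hsing M₀ hM₀ m (mem_support_iff.2 h))
  set c := coeff M₀ P with hc
  have notunit : ∀ (u : Fin 2 →₀ ℕ) (d : ℂ), u ≠ 0 →
      ¬ IsUnit (monomial u d : MvPolynomial (Fin 2) ℂ) := by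
    intro u d hu hunit
    have hmap := hunit.map (eval (fun _ => (0 : ℂ)))
    rw [eval_monomial] at hmap
    have hz : (u.prod fun _ e => (0 : ℂ) ^ e) = 0 := by
      obtain ⟨i, hi⟩ : ∃ i, u i ≠ 0 := by
        by_contra hh
        push_neg at hh
        exact hu (Finsupp.ext fun j => hh j)
      exact Finset.prod_eq_zero (Finsupp.mem_support_iff.2 hi) (zero_pow hi)
    rw [hz, mul_zero] at hmap
    exact hmap.ne_zero rfl
  by_cases h0 : M₀ 0 ≠ 0
  · left
    refine ⟨c, hc0, ?_⟩
    have hfact : P = X 0 * monomial (M₀ - Finsupp.single 0 1) c := by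
      conv_lhs => rw [hPmono, ← single_add_sub h0]
      rw [X, monomial_mul, one_mul]
    rcases hirr.isUnit_or_isUnit hfact with hu | hu
    · exact (notunit (Finsupp.single 0 1) 1 (by simp) (by rwa [X] at hu)).elim
    · have hz : M₀ - Finsupp.single 0 1 = 0 := by
        by_contra hne
        exact notunit _ c hne hu
      have hM : M₀ = Finsupp.single 0 1 := by
        have hs := single_add_sub h0 (n := M₀)
        rw [hz, add_zero] at hs
        exact hs.symm
      rw [hPmono, hM, C_mul_X_eq_monomial]
  · push_neg at h0
    by_cases h1 : M₀ 1 ≠ 0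
    · right
      refine ⟨c, hc0, ?_⟩
      have hfact : P = X 1 * monomial (M₀ - Finsupp.single 1 1) c := by
        conv_lhs => rw [hPmono, ← single_add_sub h1]
        rw [X, monomial_mul, one_mul]
      rcases hirr.isUnit_or_isUnit hfact with hu | hu
      · exact (notunit (Finsupp.single 1 1) 1 (by simp) (by rwa [X] at hu)).elim
      · have hz : M₀ - Finsupp.single 1 1 = 0 := by
          by_contra hne
          exact notunit _ c hne hu
        have hM : M₀ = Finsupp.single 1 1 := by
          have hs := single_add_sub h1 (n := M₀)
          rw [hz, add_zero] at hs
          exact hs.symm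
        rw [hPmono, hM, C_mul_X_eq_monomial]
    · push_neg at h1
      exfalso
      have hM0 : M₀ = 0 := by apply fin2_ext <;> simp [h0, h1]
      apply hirr.not_isUnit
      rw [hPmono, hM0, monomial_zero']
      exact (isUnit_iff_ne_zero.2 hc0).map C
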